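/- Let (a_0, …, a_r) be any nondecreasing finite sequence of integers satisfying a_i ≤ a_{i+2} − 2 for 0 ≤ i ≤ r−2. Then the index set {0, …, r} is the disjoint union of the ladders and staircases of the sequence: every index lies in exactly one part. -/
import Mathlib


/-- `[k,l]` is a ladder of the sequence `a` (with index set `{0,…,r}`):
the entries `a k, …, a l` are `c, c+1, …, c+l-k` for some `c`, with
`a (k-1) < c - 1` if `k > 0` and `a (l+1) > c + (l-k) + 1` if `l < r`. -/
def IsLadderZ (r : ℕ) (a : ℕ → ℤ) (k l : ℕ) : Prop :=
  k ≤ l ∧ l ≤ r ∧ (∀ j, k ≤ j → j ≤ l → a j = a k + ((j - k : ℕ) : ℤ)) ∧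
    (0 < k → a (k - 1) < a k - 1) ∧ (l < r → a l + 1 < a (l + 1))

/-- `[k,l]` is a staircase of the sequence `a` (with index set `{0,…,r}`):
`l - k + 1` is even, the entries `a k, …, a l` are
`c, c, c+2, c+2, …, c+l-k-1, c+l-k-1` for some `c`, with `a (k-2) < c - 2`
if `k > 1` and `a (l+2) > c + (l-k) + 1` if `l < r - 1`. -/
def IsStairZ (r : ℕ) (a : ℕ → ℤ) (k l : ℕ) : Prop :=
  k ≤ l ∧ l ≤ r ∧ (l - k) % 2 = 1 ∧
    (∀ j, k ≤ j → j ≤ l → a j = a k + 2 * (((j - k) / 2 : ℕ) : ℤ)) ∧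
    (1 < k → a (k - 2) < a k - 2) ∧ (l + 2 ≤ r → a l + 2 < a (l + 2))

/-- A part is a ladder or a staircase. -/
def IsPartZ (r : ℕ) (a : ℕ → ℤ) (k l : ℕ) : Prop :=
  IsLadderZ r a k l ∨ IsStairZ r a k l

section Aux

variable (r : ℕ) (a : ℕ → ℤ)

/-- extend a ladder downwards -/
lemma ladderDown :
    ∀ i : ℕ, ∃ k, k ≤ i ∧ (∀ j, k ≤ j → j ≤ i → a j = a k + ((j - k : ℕ) : ℤ)) ∧
      (k = 0 ∨ a (k - 1) + 1 ≠ a k) := by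
  intro i
  induction i with
  | zero =>
    refine ⟨0, le_rfl, ?_, Or.inl rfl⟩
    intro j h1 h2
    have hj0 : j = 0 := by omega
    subst hj0
    simp
  | succ n ih =>
    by_cases h : a n + 1 = a (n + 1)
    · obtain ⟨k, hk, hf, hs⟩ := ih
      refine ⟨k, by omega, ?_, hs⟩
      intro j h1 h2
      rcases Nat.lt_or_ge j (n + 1) with hj | hj
      · exact hf j h1 (by omega)
      · have hj' : j = n + 1 := by omega
        subst hj'
        have h2' := hf n hk le_rfl
        have hc : ((n + 1 - k : ℕ) : ℤ) = ((n - k : ℕ) : ℤ) + 1 := by omega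
        rw [hc]; linarith
    · refine ⟨n + 1, le_rfl, ?_, Or.inr (by simpa using h)⟩
      intro j h1 h2
      have hj' : j = n + 1 := by omega
      subst hj'
      simp

/-- extend a ladder upwards -/
lemma ladderUp :
    ∀ n i, i ≤ r → r - i ≤ n → ∃ l, i ≤ l ∧ l ≤ r ∧
      (∀ j, i ≤ j → j ≤ l → a j = a i + ((j - i : ℕ) : ℤ)) ∧
      (l = r ∨ a l + 1 ≠ a (l + 1)) := by
  intro n
  induction n with
  | zero =>
    intro i hir h
    have hi : i = r := by omega
    refine ⟨i, le_rfl, hir, ?_, Or.inl hi⟩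
    intro j h1 h2
    have hji : j = i := by omega
    subst hji
    simp
  | succ n ih =>
    intro i hir h
    by_cases hc : i = r ∨ a i + 1 ≠ a (i + 1)
    · refine ⟨i, le_rfl, hir, ?_, hc⟩
      intro j h1 h2
      have hji : j = i := by omega
      subst hji
      simp
    · push_neg at hc
      obtain ⟨hne, heq⟩ := hc
      obtain ⟨l, h1, h2, hf, hs⟩ := ih (i + 1) (by omega) (by omega)
      refine ⟨l, by omega, h2, ?_, hs⟩
      intro j hj1 hj2
      rcases Nat.lt_or_ge j (i + 1) with hj | hj
      · have hji : j = i := by omega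
        subst hji
        simp
      · have h3 := hf j hj hj2
        have hcast : ((j - i : ℕ) : ℤ) = ((j - (i + 1) : ℕ) : ℤ) + 1 := by omega
        rw [hcast]; linarith

variable (hmono : ∀ i, i + 1 ≤ r → a i ≤ a (i + 1))
    (hgap : ∀ i, i + 2 ≤ r → a i ≤ a (i + 2) - 2)

include hmono hgap in
/-- extend a staircase downwards -/
lemma stairDown :
    ∀ p, a p = a (p + 1) → p + 1 ≤ r → ∃ k, k ≤ p ∧ (p - k) % 2 = 0 ∧
      (∀ j, k ≤ j → j ≤ p + 1 → a j = a k + 2 * (((j - k) / 2 : ℕ) : ℤ)) ∧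
      (k ≤ 1 ∨ a (k - 2) + 2 ≠ a k) := by
  intro p
  induction p using Nat.strong_induction_on with
  | _ p ih =>
  intro heq hpr
  by_cases hc : p ≤ 1 ∨ a (p - 2) + 2 ≠ a p
  · refine ⟨p, le_rfl, by omega, ?_, hc⟩
    intro j h1 h2
    have hd : ((j - p) / 2 : ℕ) = 0 := by omega
    rw [hd]
    have hj : j = p ∨ j = p + 1 := by omega
    rcases hj with h | h
    · subst h; simp
    · subst h; simpa using heq.symm
  · push_neg at hc
    obtain ⟨hp2, heq2⟩ := hc
    have hg1 : a (p - 1) ≤ a (p - 1 + 2) - 2 := hgap (p - 1) (by omega)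
    rw [show p - 1 + 2 = p + 1 by omega] at hg1
    have hm1 : a (p - 2) ≤ a (p - 2 + 1) := hmono (p - 2) (by omega)
    rw [show p - 2 + 1 = p - 1 by omega] at hm1
    have heq3 : a (p - 2) = a (p - 1) := by linarith
    have heq3' : a (p - 2) = a (p - 2 + 1) := by
      rw [show p - 2 + 1 = p - 1 by omega]; exact heq3
    obtain ⟨k, hk, hpar, hf, hs⟩ := ih (p - 2) (by omega) heq3' (by omega)
    rw [show p - 2 + 1 = p - 1 by omega] at hf
    refine ⟨k, by omega, by omega, ?_, hs⟩
    intro j hj1 hj2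
    rcases Nat.lt_or_ge j p with hj | hj
    · exact hf j hj1 (by omega)
    · have hap2 := hf (p - 2) hk (by omega)
      have hval : a j = a (p - 2) + 2 := by
        have hj' : j = p ∨ j = p + 1 := by omega
        rcases hj' with h | h
        · subst h; linarith
        · subst h; linarith
      have hcast : (((j - k) / 2 : ℕ) : ℤ) = (((p - 2 - k) / 2 : ℕ) : ℤ) + 1 := by omega
      rw [hcast]; linarith

include hmono hgap in
/-- extend a staircase upwards -/
lemma stairUp :
    ∀ n p, a p = a (p + 1) → p + 1 ≤ r → r - p ≤ n →
      ∃ l, p + 1 ≤ l ∧ l ≤ r ∧ (l - p) % 2 = 1 ∧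
        (∀ j, p ≤ j → j ≤ l → a j = a p + 2 * (((j - p) / 2 : ℕ) : ℤ)) ∧
        (r < l + 2 ∨ a l + 2 ≠ a (l + 2)) := by
  intro n
  induction n with
  | zero => intro p _ h1 h2; omega
  | succ n ih =>
    intro p heq hpr hn
    by_cases hc : r < p + 1 + 2 ∨ a (p + 1) + 2 ≠ a (p + 1 + 2)
    · refine ⟨p + 1, le_rfl, hpr, by omega, ?_, hc⟩
      intro j h1 h2
      have hd : ((j - p) / 2 : ℕ) = 0 := by omega
      rw [hd]
      have hj : j = p ∨ j = p + 1 := by omega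
      rcases hj with h | h
      · subst h; simp
      · subst h; simpa using heq.symm
    · push_neg at hc
      obtain ⟨hr3, heq3⟩ := hc
      rw [show p + 1 + 2 = p + 2 + 1 by omega] at heq3
      have hg := hgap p (by omega)
      have hm := hmono (p + 2) (by omega)
      have ha2 : a (p + 2) = a (p + 2 + 1) := by linarith
      obtain ⟨l, hl1, hl2, hlpar, hf, hs⟩ := ih (p + 2) ha2 (by omega) (by omega)
      refine ⟨l, by omega, hl2, by omega, ?_, hs⟩
      intro j hj1 hj2
      rcases Nat.lt_or_ge j (p + 2) with hj | hj
      · have hd : ((j - p) / 2 : ℕ) = 0 := by omega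
        rw [hd]
        have hj' : j = p ∨ j = p + 1 := by omega
        rcases hj' with h | h
        · subst h; simp
        · subst h; simpa using heq.symm
      · have h3 := hf j hj hj2
        have hv : a (p + 2) = a p + 2 := by linarith
        have hcast : (((j - p) / 2 : ℕ) : ℤ) = (((j - (p + 2)) / 2 : ℕ) : ℤ) + 1 := by omega
        rw [hcast]; linarith

/-- an index inside a staircase has an equal neighbour -/
lemma stairNeighbor {k l idx : ℕ} (h : IsStairZ r a k l) (hk : k ≤ idx) (hl : idx ≤ l) :
    ((idx - k) % 2 = 0 ∧ idx < l ∧ a (idx + 1) = a idx) ∨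
      ((idx - k) % 2 = 1 ∧ k < idx ∧ a (idx - 1) = a idx) := by
  obtain ⟨hkl, hlr, hpar, hf, _, _⟩ := h
  rcases Nat.mod_two_eq_zero_or_one (idx - k) with hpe | hpo
  · have hil : idx < l := by omega
    have e1 := hf (idx + 1) (by omega) (by omega)
    have e2 := hf idx hk hl
    have hc : (((idx + 1 - k) / 2 : ℕ) : ℤ) = (((idx - k) / 2 : ℕ) : ℤ) := by omega
    rw [hc] at e1
    exact Or.inl ⟨hpe, hil, by linarith⟩
  · have hki : k < idx := by omega
    have e1 := hf (idx - 1) (by omega) (by omega)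
    have e2 := hf idx hk hl
    have hc : (((idx - 1 - k) / 2 : ℕ) : ℤ) = (((idx - k) / 2 : ℕ) : ℤ) := by omega
    rw [hc] at e1
    exact Or.inr ⟨hpo, hki, by linarith⟩

/-- a ladder and a staircase cannot share an index -/
lemma ladderStairDisj {k l k' l' idx : ℕ} (hL : IsLadderZ r a k l) (hS : IsStairZ r a k' l')
    (h1 : k ≤ idx) (h2 : idx ≤ l) (h3 : k' ≤ idx) (h4 : idx ≤ l') : False := by
  obtain ⟨hkl, hlr, hf, hbot, htop⟩ := hL
  have hlr' : l' ≤ r := hS.2.1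
  rcases stairNeighbor r a hS h3 h4 with ⟨_, hlt, hnb⟩ | ⟨_, hlt, hnb⟩
  · -- a (idx+1) = a idx
    rcases Nat.lt_or_ge idx l with hil | hil
    · have e1 := hf (idx + 1) (by omega) (by omega)
      have e2 := hf idx h1 h2
      have hc : ((idx + 1 - k : ℕ) : ℤ) = ((idx - k : ℕ) : ℤ) + 1 := by omega
      rw [hc] at e1
      linarith
    · have hil' : idx = l := by omega
      subst hil'
      have := htop (by omega)
      linarith
  · -- a (idx-1) = a idx
    rcases Nat.lt_or_ge k idx with hik | hik
    · have e1 := hf (idx - 1) (by omega) (by omega)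
      have e2 := hf idx h1 h2
      have hc : ((idx - k : ℕ) : ℤ) = ((idx - 1 - k : ℕ) : ℤ) + 1 := by omega
      rw [hc] at e2
      linarith
    · have hik' : k = idx := by omega
      have := hbot (by omega)
      rw [hik'] at this
      linarith

/-- two ladders sharing an index coincide -/
lemma ladderUnique {k1 l1 k2 l2 idx : ℕ}
    (hA : IsLadderZ r a k1 l1) (hB : IsLadderZ r a k2 l2)
    (h1 : k1 ≤ idx) (h2 : idx ≤ l1) (h3 : k2 ≤ idx) (h4 : idx ≤ l2) :
    k1 = k2 ∧ l1 = l2 := by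
  obtain ⟨hkl1, hlr1, hf1, hbot1, htop1⟩ := hA
  obtain ⟨hkl2, hlr2, hf2, hbot2, htop2⟩ := hB
  have hbotaux : ∀ ka la kb lb : ℕ,
      (∀ j, ka ≤ j → j ≤ la → a j = a ka + ((j - ka : ℕ) : ℤ)) →
      (0 < kb → a (kb - 1) < a kb - 1) →
      ka ≤ idx → idx ≤ la → kb ≤ idx → ¬ ka < kb := by
    intro ka la kb lb hfa hbb hka hla hkb hlt
    have hb := hbb (by omega)
    have e1 := hfa (kb - 1) (by omega) (by omega)
    have e2 := hfa kb (by omega) (by omega)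
    have hc : ((kb - ka : ℕ) : ℤ) = ((kb - 1 - ka : ℕ) : ℤ) + 1 := by omega
    rw [hc] at e2
    linarith
  have hk : k1 = k2 := by
    rcases Nat.lt_trichotomy k1 k2 with h | h | h
    · exact absurd h (hbotaux k1 l1 k2 l2 hf1 hbot2 h1 h2 h3)
    · exact h
    · exact absurd h (hbotaux k2 l2 k1 l1 hf2 hbot1 h3 h4 h1)
  have htopaux : ∀ ka la lb : ℕ,
      (∀ j, ka ≤ j → j ≤ la → a j = a ka + ((j - ka : ℕ) : ℤ)) →
      (lb < r → a lb + 1 < a (lb + 1)) →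
      ka ≤ idx → idx ≤ la → idx ≤ lb → la ≤ r → ¬ lb < la := by
    intro ka la lb hfa htb hka hla hlb hlar hlt
    have hb := htb (by omega)
    have e1 := hfa lb (by omega) (by omega)
    have e2 := hfa (lb + 1) (by omega) (by omega)
    have hc : ((lb + 1 - ka : ℕ) : ℤ) = ((lb - ka : ℕ) : ℤ) + 1 := by omega
    rw [hc] at e2
    linarith
  have hl : l1 = l2 := by
    rcases Nat.lt_trichotomy l1 l2 with h | h | h
    · exact absurd h (htopaux k2 l2 l1 hf2 htop1 h3 h4 h2 hlr2)
    · exact h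
    · exact absurd h (htopaux k1 l1 l2 hf1 htop2 h1 h2 h4 hlr1)
  exact ⟨hk, hl⟩

include hgap in
/-- two staircases sharing an index coincide -/
lemma stairUnique {k1 l1 k2 l2 idx : ℕ}
    (hA : IsStairZ r a k1 l1) (hB : IsStairZ r a k2 l2)
    (h1 : k1 ≤ idx) (h2 : idx ≤ l1) (h3 : k2 ≤ idx) (h4 : idx ≤ l2) :
    k1 = k2 ∧ l1 = l2 := by
  -- first: the parities agree
  have hpareq : (idx - k1) % 2 = (idx - k2) % 2 := by
    by_contra hne
    have hparaux : ∀ ka la kb lb : ℕ, IsStairZ r a ka la → IsStairZ r a kb lb →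
        ka ≤ idx → idx ≤ la → kb ≤ idx → idx ≤ lb →
        (idx - ka) % 2 = 0 → (idx - kb) % 2 = 1 → False := by
      intro ka la kb lb hSa hSb hka hla hkb hlb hea hob
      rcases stairNeighbor r a hSa hka hla with ⟨_, hlt, hnb⟩ | ⟨h', _, _⟩
      · rcases stairNeighbor r a hSb hkb hlb with ⟨h'', _, _⟩ | ⟨_, hlt', hnb'⟩
        · omega
        · have hlar : la ≤ r := hSa.2.1
          have hg := hgap (idx - 1) (by omega)
          rw [show idx - 1 + 2 = idx + 1 by omega] at hg
          linarith
      · omega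
    rcases Nat.mod_two_eq_zero_or_one (idx - k1) with he | ho
    · exact hparaux k1 l1 k2 l2 hA hB h1 h2 h3 h4 he (by omega)
    · exact hparaux k2 l2 k1 l1 hB hA h3 h4 h1 h2 (by omega) ho
  obtain ⟨hkl1, hlr1, hpar1, hf1, hbot1, htop1⟩ := hA
  obtain ⟨hkl2, hlr2, hpar2, hf2, hbot2, htop2⟩ := hB
  have hbotaux : ∀ ka la kb : ℕ,
      (∀ j, ka ≤ j → j ≤ la → a j = a ka + 2 * (((j - ka) / 2 : ℕ) : ℤ)) →
      (1 < kb → a (kb - 2) < a kb - 2) →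
      ka ≤ idx → idx ≤ la → kb ≤ idx → (idx - ka) % 2 = (idx - kb) % 2 → ¬ ka < kb := by
    intro ka la kb hfa hbb hka hla hkb hpe hlt
    have hkb2 : ka + 2 ≤ kb := by omega
    have hb := hbb (by omega)
    have e1 := hfa (kb - 2) (by omega) (by omega)
    have e2 := hfa kb (by omega) (by omega)
    have hc : (((kb - ka) / 2 : ℕ) : ℤ) = (((kb - 2 - ka) / 2 : ℕ) : ℤ) + 1 := by omega
    rw [hc] at e2
    linarith
  have hk : k1 = k2 := by
    rcases Nat.lt_trichotomy k1 k2 with h | h | h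
    · exact absurd h (hbotaux k1 l1 k2 hf1 hbot2 h1 h2 h3 hpareq)
    · exact h
    · exact absurd h (hbotaux k2 l2 k1 hf2 hbot1 h3 h4 h1 hpareq.symm)
  have htopaux : ∀ ka la lb : ℕ,
      (∀ j, ka ≤ j → j ≤ la → a j = a ka + 2 * (((j - ka) / 2 : ℕ) : ℤ)) →
      (lb + 2 ≤ r → a lb + 2 < a (lb + 2)) →
      ka ≤ idx → idx ≤ la → idx ≤ lb → la ≤ r →
      (la - ka) % 2 = 1 → (lb - ka) % 2 = 1 → ¬ lb < la := by
    intro ka la lb hfa htb hka hla hlb hlar hpa hpb hlt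
    have hla2 : lb + 2 ≤ la := by omega
    have hb := htb (by omega)
    have e1 := hfa lb (by omega) (by omega)
    have e2 := hfa (lb + 2) (by omega) (by omega)
    have hc : (((lb + 2 - ka) / 2 : ℕ) : ℤ) = (((lb - ka) / 2 : ℕ) : ℤ) + 1 := by omega
    rw [hc] at e2
    linarith
  have hl : l1 = l2 := by
    rcases Nat.lt_trichotomy l1 l2 with h | h | h
    · refine absurd h (htopaux k2 l2 l1 hf2 htop1 h3 h4 h2 hlr2 hpar2 ?_)
      omega
    · exact h
    · refine absurd h (htopaux k1 l1 l2 hf1 htop2 h1 h2 h4 hlr1 hpar1 ?_)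
      omega
  exact ⟨hk, hl⟩

include hgap in
/-- uniqueness of the part containing a given index -/
lemma partUnique {k1 l1 k2 l2 idx : ℕ}
    (hA : IsPartZ r a k1 l1) (hB : IsPartZ r a k2 l2)
    (h1 : k1 ≤ idx) (h2 : idx ≤ l1) (h3 : k2 ≤ idx) (h4 : idx ≤ l2) :
    k1 = k2 ∧ l1 = l2 := by
  rcases hA with hA | hA <;> rcases hB with hB | hB
  · exact ladderUnique r a hA hB h1 h2 h3 h4
  · exact absurd (ladderStairDisj r a hA hB h1 h2 h3 h4) (by simp)
  · exact absurd (ladderStairDisj r a hB hA h3 h4 h1 h2) (by simp)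
  · exact stairUnique r a hgap hA hB h1 h2 h3 h4

end Aux

/-- Any nondecreasing finite sequence of integers `(a 0, …, a r)` with
`a i ≤ a (i+2) - 2` has its index set `{0,…,r}` partitioned by its parts:
every index lies in exactly one part. -/
theorem stmt2 (r : ℕ) (a : ℕ → ℤ)
    (hmono : ∀ i, i + 1 ≤ r → a i ≤ a (i + 1))
    (hgap : ∀ i, i + 2 ≤ r → a i ≤ a (i + 2) - 2) :
    ∀ idx, idx ≤ r →
      ∃! kl : ℕ × ℕ, IsPartZ r a kl.1 kl.2 ∧ kl.1 ≤ idx ∧ idx ≤ kl.2 := by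
  intro idx hidx
  suffices hex : ∃ k l : ℕ, IsPartZ r a k l ∧ k ≤ idx ∧ idx ≤ l by
    obtain ⟨k, l, hp, hk, hl⟩ := hex
    refine ⟨(k, l), ⟨hp, hk, hl⟩, ?_⟩
    rintro ⟨k2, l2⟩ ⟨hp2, hk2, hl2⟩
    obtain ⟨e1, e2⟩ := partUnique r a hgap hp2 hp hk2 hl2 hk hl
    simp only [Prod.mk.injEq]
    exact ⟨e1, e2⟩
  by_cases hstair : (idx < r ∧ a idx = a (idx + 1)) ∨ (0 < idx ∧ a (idx - 1) = a idx)
  · -- idx lies in a staircase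
    obtain ⟨p, hp1, hp2, hpeq, hpr⟩ :
        ∃ p, p ≤ idx ∧ idx ≤ p + 1 ∧ a p = a (p + 1) ∧ p + 1 ≤ r := by
      rcases hstair with ⟨h1, h2⟩ | ⟨h1, h2⟩
      · exact ⟨idx, le_rfl, by omega, h2, by omega⟩
      · refine ⟨idx - 1, by omega, by omega, ?_, by omega⟩
        rw [show idx - 1 + 1 = idx by omega]; exact h2
    obtain ⟨k, hk1, hk2, hkf, hks⟩ := stairDown r a hmono hgap p hpeq hpr
    obtain ⟨l, hl1, hl2, hl3, hlf, hls⟩ := stairUp r a hmono hgap (r - p) p hpeq hpr le_rfl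
    have hap := hkf p hk1 (by omega)
    have hST : IsStairZ r a k l := by
      refine ⟨by omega, hl2, by omega, ?_, ?_, ?_⟩
      · intro j hj1 hj2
        rcases le_or_gt j (p + 1) with hj | hj
        · exact hkf j hj1 hj
        · have e1 := hlf j (by omega) hj2
          have hc : (((j - k) / 2 : ℕ) : ℤ) =
              (((j - p) / 2 : ℕ) : ℤ) + (((p - k) / 2 : ℕ) : ℤ) := by omega
          rw [hc]; linarith
      · intro hk'
        have hg := hgap (k - 2) (by omega)
        rw [show k - 2 + 2 = k by omega] at hg
        have hne : a (k - 2) + 2 ≠ a k := by omega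
        omega
      · intro hl'
        have hg := hgap l hl'
        have hne : a l + 2 ≠ a (l + 2) := by omega
        omega
    exact ⟨k, l, Or.inr hST, by omega, by omega⟩
  · -- idx lies in a ladder
    push_neg at hstair
    obtain ⟨hs1, hs2⟩ := hstair
    obtain ⟨k, hk1, hkf, hks⟩ := ladderDown a idx
    obtain ⟨l, hl1, hl2, hlf, hls⟩ := ladderUp r a (r - idx) idx hidx le_rfl
    have hai := hkf idx hk1 le_rfl
    have hLD : IsLadderZ r a k l := by
      refine ⟨by omega, hl2, ?_, ?_, ?_⟩
      · intro j hj1 hj2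
        rcases le_or_gt j idx with hj | hj
        · exact hkf j hj1 hj
        · have e1 := hlf j (by omega) hj2
          have hc : ((j - k : ℕ) : ℤ) = ((j - idx : ℕ) : ℤ) + ((idx - k : ℕ) : ℤ) := by omega
          rw [hc]; linarith
      · intro hk'
        have hne : a (k - 1) + 1 ≠ a k := by
          rcases hks with h | h
          · omega
          · exact h
        have hle : a (k - 1) ≤ a k - 1 := by
          rcases Nat.lt_or_ge k idx with h | h
          · have e1 := hkf (k + 1) (by omega) (by omega)
            have hc : ((k + 1 - k : ℕ) : ℤ) = 1 := by omega
            rw [hc] at e1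
            have hg := hgap (k - 1) (by omega)
            rw [show k - 1 + 2 = k + 1 by omega] at hg
            linarith
          · have hkeq : k = idx := by omega
            have hm := hmono (k - 1) (by omega)
            rw [show k - 1 + 1 = k by omega] at hm
            have hne2 := hs2 (by omega)
            rw [← hkeq] at hne2
            omega
        omega
      · intro hl'
        have hne : a l + 1 ≠ a (l + 1) := by
          rcases hls with h | h
          · omega
          · exact h
        have hle : a l + 1 ≤ a (l + 1) := by
          rcases Nat.lt_or_ge idx l with h | h
          · have e1 := hlf (l - 1) (by omega) (by omega)
            have e2 := hlf l (by omega) le_rfl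
            have hc : ((l - idx : ℕ) : ℤ) = ((l - 1 - idx : ℕ) : ℤ) + 1 := by omega
            rw [hc] at e2
            have hg := hgap (l - 1) (by omega)
            rw [show l - 1 + 2 = l + 1 by omega] at hg
            linarith
          · have hleq : l = idx := by omega
            have hne2 := hs1 (by omega)
            rw [← hleq] at hne2
            have hm := hmono l (by omega)
            omega
        omega
    exact ⟨k, l, Or.inl hLD, hk1, hl1⟩
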